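/- Let d_1, …, d_m be polynomials in ℝ[x_1,…,x_m], let Jac(d) be the m×m matrix with (s,j) entry ∂d_s/∂x_j, and let I ⊆ {1,…,m}. Suppose that the polynomial obtained from det(Jac(d)) by substituting x_i = 0 for all i ∈ I is not the zero polynomial. Then there exists a subset S ⊆ {1,…,m} with |S| = m − |I| such that the determinant of the (m−|I|)×(m−|I|) matrix whose (s,j) entry (s ∈ S, j ∉ I) is ∂d̃_s/∂x_j is not the zero polynomial, where d̃_s ∈ ℝ[x_j : j ∉ I] denotes d_s with x_i = 0 substituted for all i ∈ I. -/

import Mathlib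

open MvPolynomial Matrix

/-- Extract, from a linearly independent family of `k` vectors in `J → K`, a set of `k`
coordinates on which the corresponding square matrix has nonzero determinant. -/
lemma aux_exists_rows_det_ne_zero {K : Type*} [Field K] {k : ℕ} {J : Type*} [Fintype J]
    [DecidableEq J] (v : Fin k → (J → K)) (hv : LinearIndependent K v) :
    ∃ rows : Fin k ↪ J, (Matrix.of fun s t : Fin k => v t (rows s)).det ≠ 0 := by
  classical
  set N : Matrix (Fin k) J K := Matrix.of v with hN
  have hrank : N.rank = k := by
    simpa using (hv.rank_matrix (M := N))
  set w : J → (Fin k → K) := fun i t => v t i with hw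
  have hrange : Set.range Nᵀ = Set.range w := rfl
  have hfin : Module.finrank K (Submodule.span K (Set.range w)) = k := by
    rw [show Set.range w = Set.range N.col from rfl, ← Matrix.rank_eq_finrank_span_cols]; exact hrank
  have htop : Submodule.span K (Set.range w) = ⊤ := by
    apply Submodule.eq_top_of_finrank_eq
    rw [hfin, Module.finrank_pi]
    simp
  obtain ⟨s, hsub, hspan, hli⟩ := exists_linearIndependent K (Set.range w)
  have hspan' : ⊤ ≤ Submodule.span K (Set.range ((↑) : s → (Fin k → K))) := by
    rw [Subtype.range_coe, hspan, htop]
  let b : Module.Basis s K (Fin k → K) := Module.Basis.mk hli hspan'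
  let e : s ≃ Fin k := b.indexEquiv (Pi.basisFun K (Fin k))
  have hchoice : ∀ x : s, ∃ i : J, w i = (x : Fin k → K) := fun x => hsub x.2
  choose g hg using hchoice
  have ginj : Function.Injective g := by
    intro a b hab
    have : (a : Fin k → K) = (b : Fin k → K) := by rw [← hg a, ← hg b, hab]
    exact Subtype.ext this
  refine ⟨⟨fun t => g (e.symm t), fun a b hab => by
    simpa using congrArg e (ginj hab)⟩, ?_⟩
  have hrows : (fun i : Fin k => (Matrix.of fun s t : Fin k =>
      v t (g (e.symm s))) i) = fun i => b (e.symm i) := by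
    funext i
    have h1 : w (g (e.symm i)) = ((e.symm i : s) : Fin k → K) := hg _
    have h2 : b (e.symm i) = ((e.symm i : s) : Fin k → K) := Module.Basis.mk_apply hli hspan' _
    funext t
    rw [h2, ← h1]
    rfl
  intro hdet
  have hIsUnit : IsUnit (Matrix.of fun s t : Fin k => v t (g (e.symm s))) := by
    rw [← Matrix.linearIndependent_rows_iff_isUnit]
    change LinearIndependent K (fun i : Fin k => (Matrix.of fun s t : Fin k => v t (g (e.symm s))) i)
    rw [hrows]
    exact b.linearIndependent.comp e.symm e.symm.injective
  exact (Matrix.isUnit_iff_isUnit_det _ |>.mp hIsUnit).ne_zero hdet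

/-- Partial derivatives in a variable `j ∉ I` commute with setting the variables of `I` to 0. -/
lemma aux_pderiv_aeval_comm {m : ℕ} (I : Finset (Fin m)) {j : Fin m} (hj : j ∉ I)
    (p : MvPolynomial (Fin m) ℝ) :
    MvPolynomial.pderiv j
      ((MvPolynomial.aeval (fun i : Fin m => if i ∈ I then (0 : MvPolynomial (Fin m) ℝ)
          else MvPolynomial.X i)) p)
      = (MvPolynomial.aeval (fun i : Fin m => if i ∈ I then (0 : MvPolynomial (Fin m) ℝ)
          else MvPolynomial.X i)) (MvPolynomial.pderiv j p) := by
  classical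
  induction p using MvPolynomial.induction_on with
  | C a => simp
  | add p q hp hq => simp only [map_add, hp, hq]
  | mul_X p n hp =>
    rw [_root_.map_mul, pderiv_mul, pderiv_mul, map_add, _root_.map_mul, _root_.map_mul, hp, aeval_X]
    congr 1
    by_cases hn : n ∈ I
    · have hnj : n ≠ j := fun hE => hj (hE ▸ hn)
      rw [if_pos hn, pderiv_X]
      simp [Pi.single_apply, hnj]
    · rw [if_neg hn, pderiv_X]
      by_cases hnj : n = j <;> simp [Pi.single_apply, hnj]

/-- Let `d₁, …, d_m ∈ ℝ[x₁,…,x_m]` and let `I ⊆ {1,…,m}`. If the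
polynomial obtained from `det (Jac d)` by substituting `x_i = 0` for all `i ∈ I` is not
the zero polynomial, then there is a choice of `m - |I|` of the substituted polynomials
`d̃_s` (rows) such that the `(m-|I|) × (m-|I|)` Jacobian of these with respect to the
variables `x_j`, `j ∉ I` (columns), has nonzero determinant. -/
theorem exists_nonsingular_sub_jacobian (m : ℕ) (d : Fin m → MvPolynomial (Fin m) ℝ)
    (I : Finset (Fin m))
    (h : (MvPolynomial.aeval (fun j : Fin m => if j ∈ I then (0 : MvPolynomial (Fin m) ℝ) else MvPolynomial.X j))
        (Matrix.det (Matrix.of fun s j : Fin m => MvPolynomial.pderiv j (d s))) ≠ 0) :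
    ∃ (rows : Fin (m - I.card) ↪ Fin m) (cols : Fin (m - I.card) ↪ Fin m),
      (∀ t, cols t ∉ I) ∧
      Matrix.det (Matrix.of fun s t : Fin (m - I.card) =>
          MvPolynomial.pderiv (cols t)
            ((MvPolynomial.aeval (fun j : Fin m => if j ∈ I then (0 : MvPolynomial (Fin m) ℝ) else MvPolynomial.X j))
              (d (rows s)))) ≠ 0 := by
  classical
  set σ : MvPolynomial (Fin m) ℝ →ₐ[ℝ] MvPolynomial (Fin m) ℝ :=
    MvPolynomial.aeval (fun j : Fin m => if j ∈ I then (0 : MvPolynomial (Fin m) ℝ)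
      else MvPolynomial.X j) with hσ
  set k := m - I.card with hk
  -- the column embedding: an enumeration of Iᶜ
  have hIc : Iᶜ.card = k := by
    rw [Finset.card_compl, Fintype.card_fin]
  let ce := Iᶜ.orderIsoOfFin hIc
  let cols : Fin k ↪ Fin m := ⟨fun t => (ce t : Fin m), fun a b hab => by
    exact ce.injective (Subtype.ext hab)⟩
  have hcols : ∀ t, cols t ∉ I := fun t => Finset.mem_compl.mp (ce t).2
  -- the substituted Jacobian
  set M' : Matrix (Fin m) (Fin m) (MvPolynomial (Fin m) ℝ) := Matrix.of fun s j => σ (MvPolynomial.pderiv j (d s))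
    with hM'
  have hdetM' : M'.det ≠ 0 := by
    have hmap : M' = σ.mapMatrix (Matrix.of fun s j : Fin m => MvPolynomial.pderiv j (d s)) := by
      refine Matrix.ext fun s j => ?_; rfl
    rw [hmap, ← AlgHom.map_det]
    exact h
  -- move to the fraction field
  let K := FractionRing (MvPolynomial (Fin m) ℝ)
  let ψ : MvPolynomial (Fin m) ℝ →+* K := algebraMap _ K
  have hψ : Function.Injective ψ := IsFractionRing.injective (MvPolynomial (Fin m) ℝ) K
  set B : Matrix (Fin m) (Fin m) K := M'.map ψ with hB
  have hdetB : B.det ≠ 0 := by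
    rw [hB, ← RingHom.mapMatrix_apply, ← RingHom.map_det]
    intro h0
    exact hdetM' (hψ (by simpa using h0))
  have hBunit : IsUnit B := by
    rw [Matrix.isUnit_iff_isUnit_det, isUnit_iff_ne_zero]
    exact hdetB
  have hlicols : LinearIndependent K (fun j => Bᵀ j) :=
    Matrix.linearIndependent_cols_iff_isUnit.mpr hBunit
  have hv : LinearIndependent K (fun t : Fin k => (fun i : Fin m => B i (cols t))) := by
    have := hlicols.comp cols cols.injective
    exact this
  obtain ⟨rows, hrows⟩ := aux_exists_rows_det_ne_zero _ hv
  refine ⟨rows, cols, hcols, ?_⟩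
  -- rewrite the target matrix as a submatrix of M'
  have hTeq : (Matrix.of fun s t : Fin k =>
      MvPolynomial.pderiv (cols t) (σ (d (rows s)))) = M'.submatrix rows cols := by
    refine Matrix.ext fun s t => ?_
    exact aux_pderiv_aeval_comm I (hcols t) (d (rows s))
  intro h0
  apply hrows
  have hsub : (Matrix.of fun s t : Fin k => (fun i : Fin m => B i (cols t)) (rows s))
      = (M'.submatrix rows cols).map ψ := by
    refine Matrix.ext fun s t => ?_; rfl
  rw [hsub, ← RingHom.mapMatrix_apply, ← RingHom.map_det, ← hTeq, h0, map_zero]
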